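/- Let G=(V,A) be a symmetric directed graph (if (a,b) ∈ A then (b,a) ∈ A) with a weight function w on the arcs that is symmetric (w(a,b) = w(b,a) for every arc (a,b)) and positive, and let a, b, c be three vertices of G. If P_{a,b} is a minimum-weight directed path from a to b and P_{b,c} is a minimum-weight directed path from b to c, then P_{a,b} and P_{b,c} have no arc in common. -/

import Mathlib

/-- `IsDiPath A a b p` asserts that the list of vertices `p` is a simple directed
path from `a` to `b` in the directed graph with arc relation `A`. -/
def IsDiPath {V : Type*} (A : V → V → Prop) (a b : V) (p : List V) : Prop :=
  p.head? = some a ∧ p.getLast? = some b ∧ List.Chain' A p ∧ p.Nodup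

/-- The arcs traversed by a path: the list of consecutive pairs of vertices. -/
def pathArcs {V : Type*} (p : List V) : List (V × V) :=
  p.zip p.tail

/-- The total weight of a path: the sum of the weights of its arcs. -/
def pathWeight {V : Type*} (w : V → V → ℝ) (p : List V) : ℝ :=
  ((p.zip p.tail).map fun e => w e.1 e.2).sum

/-- `p` is a shortest (minimum total weight) directed path from `a` to `b`. -/
def IsShortestDiPath {V : Type*} (A : V → V → Prop) (w : V → V → ℝ) (a b : V)
    (p : List V) : Prop :=
  IsDiPath A a b p ∧ ∀ q, IsDiPath A a b q → pathWeight w p ≤ pathWeight w q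


section Aux
variable {V : Type*} (w : V → V → ℝ)

lemma pw_nil : pathWeight w ([] : List V) = 0 := rfl

lemma pw_single (u : V) : pathWeight w [u] = 0 := rfl

lemma pw_cons (u : V) (p : List V) :
    pathWeight w (u :: p) = (p.head?.elim 0 (w u)) + pathWeight w p := by
  cases p with
  | nil => simp [pathWeight]
  | cons v q => simp [pathWeight]

lemma pw_split (v : V) (l r : List V) :
    pathWeight w (l ++ v :: r) = pathWeight w (l ++ [v]) + pathWeight w (v :: r) := by
  induction l with
  | nil => simp [pw_cons, pw_single, pw_nil]
  | cons u l ih =>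
      have h : (l ++ v :: r).head? = (l ++ [v]).head? := by
        simp [List.head?_append]
      simp only [List.cons_append, pw_cons, h, ih]
      ring

lemma pw_pair (u v : V) : pathWeight w [u, v] = w u v := by
  simp [pathWeight]

lemma pw_nonneg {A : V → V → Prop} (hwpos : ∀ x y, A x y → 0 < w x y)
    {p : List V} (hc : List.Chain' A p) : 0 ≤ pathWeight w p := by
  induction p with
  | nil => simp [pw_nil]
  | cons u q ih =>
      rw [pw_cons]
      rcases List.isChain_cons.1 hc with ⟨h1, h2⟩
      have : (0:ℝ) ≤ q.head?.elim 0 (w u) := by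
        cases hq : q.head? with
        | none => simp
        | some v => simpa using (hwpos u v (h1 v hq)).le
      linarith [ih h2]

lemma pw_reverse {A : V → V → Prop} (hwsym : ∀ x y, A x y → w x y = w y x)
    {p : List V} (hc : List.Chain' A p) : pathWeight w p.reverse = pathWeight w p := by
  induction p with
  | nil => rfl
  | cons u q ih =>
      rcases List.isChain_cons.1 hc with ⟨h1, h2⟩
      cases q with
      | nil => rfl
      | cons v m =>
          have hA : A u v := h1 v rfl
          have hr : (u :: v :: m).reverse = m.reverse ++ v :: [u] := by simp
          rw [hr, pw_split, pw_pair, pw_cons]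
          have hrev : m.reverse ++ [v] = (v :: m).reverse := by simp
          rw [hrev, ih h2]
          simp [List.head?, hwsym u v hA]
          ring

lemma mem_pathArcs_split {V : Type*} {p : List V} {e : V × V}
    (h : e ∈ pathArcs p) : ∃ l r, p = l ++ e.1 :: e.2 :: r := by
  induction p with
  | nil => simp [pathArcs] at h
  | cons u q ih =>
      cases q with
      | nil => simp [pathArcs] at h
      | cons v m =>
          have : e = (u, v) ∨ e ∈ pathArcs (v :: m) := by
            simpa [pathArcs] using h
          rcases this with h | h
          · exact ⟨[], m, by simp [h]⟩
          · obtain ⟨l, r, hl⟩ := ih h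
            exact ⟨u :: l, r, by simp [hl]⟩

lemma arc_of_mem_pathArcs {V : Type*} {A : V → V → Prop} {p : List V} {e : V × V}
    (hc : List.Chain' A p) (h : e ∈ pathArcs p) : A e.1 e.2 := by
  obtain ⟨l, r, rfl⟩ := mem_pathArcs_split h
  have := (List.isChain_append.1 hc).2.1
  exact (List.isChain_cons_cons.1 this).1

lemma walk_to_path {V : Type*} {A : V → V → Prop} {w : V → V → ℝ}
    (hwpos : ∀ x y, A x y → 0 < w x y) :
    ∀ n (p : List V) (a b : V), p.length ≤ n → p.head? = some a → p.getLast? = some b →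
      List.Chain' A p → ∃ q, IsDiPath A a b q ∧ pathWeight w q ≤ pathWeight w p := by
  intro n
  induction n with
  | zero => intro p a b hlen hh _ _; cases p <;> simp_all
  | succ n ih =>
      intro p a b hlen hh hl hc
      by_cases hnd : p.Nodup
      · exact ⟨p, ⟨hh, hl, hc, hnd⟩, le_refl _⟩
      · obtain ⟨x, hx⟩ := List.exists_duplicate_iff_not_nodup.2 hnd
        have hsub : List.Sublist [x, x] p := List.duplicate_iff_sublist.1 hx
        obtain ⟨r₁, r₂, hr, hx1, hx2⟩ := List.cons_sublist_iff.1 hsub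
        obtain ⟨r₃, r₄, hr2, hx3, -⟩ := List.cons_sublist_iff.1 hx2
        obtain ⟨l1, l1', rfl⟩ := List.append_of_mem hx1
        obtain ⟨l2, l2', rfl⟩ := List.append_of_mem hx3
        set m := l1' ++ l2 with hm
        set l3 := l2' ++ r₄ with hl3
        have hp : p = l1 ++ x :: (m ++ x :: l3) := by
          rw [hr, hr2, hm, hl3]; simp
        set p' := l1 ++ x :: l3 with hp'
        have hlen' : p'.length ≤ n := by
          have h1 : p.length = l1.length + (m.length + (l3.length + 2)) := by
            rw [hp]; simp; omega
          have h2 : p'.length = l1.length + (l3.length + 1) := by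
            rw [hp']; simp
          omega
        have hh' : p'.head? = some a := by
          rw [← hh, hp, hp']
          cases l1 <;> simp
        have hl' : p'.getLast? = some b := by
          rw [← hl, hp, hp',
            List.getLast?_append_of_ne_nil l1 (by simp),
            List.getLast?_append_of_ne_nil l1 (by simp),
            show x :: (m ++ x :: l3) = (x :: m) ++ x :: l3 by simp,
            List.getLast?_append_of_ne_nil (x :: m) (by simp)]
        -- chains
        have hcp : List.Chain' A ((l1 ++ [x]) ++ (m ++ x :: l3)) := by
          rw [hp] at hc; simpa using hc
        rcases List.isChain_append.1 hcp with ⟨hc1, hc2, hc3⟩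
        have hcxl3 : List.Chain' A (x :: l3) := (List.isChain_append.1 hc2).2.1
        have hc' : List.Chain' A p' := by
          rw [hp', show l1 ++ x :: l3 = (l1 ++ [x]) ++ l3 by simp]
          refine List.isChain_append.2 ⟨hc1, (List.isChain_cons.1 hcxl3).2, ?_⟩
          intro u hu v hv
          rw [List.getLast?_concat] at hu
          obtain rfl : u = x := by simpa using hu.symm
          exact (List.isChain_cons.1 hcxl3).1 v hv
        -- weights
        have e1 : pathWeight w p
            = pathWeight w (l1 ++ [x]) + pathWeight w (x :: (m ++ x :: l3)) := by
          rw [hp]; exact pw_split w x l1 (m ++ x :: l3)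
        have e2 : pathWeight w (x :: (m ++ x :: l3))
            = pathWeight w ((x :: m) ++ [x]) + pathWeight w (x :: l3) := by
          have h := pw_split w x (x :: m) l3
          simpa using h
        have e3 : pathWeight w p' = pathWeight w (l1 ++ [x]) + pathWeight w (x :: l3) := by
          rw [hp']; exact pw_split w x l1 l3
        have hcfull : List.Chain' A ((x :: m) ++ x :: l3) := by
          have hj0 : ∀ y ∈ (m ++ x :: l3).head?, A x y := by
            intro y hy
            exact hc3 x (by simp [List.getLast?_concat]) y hy
          show List.IsChain A _
          simpa using List.isChain_cons.2 ⟨hj0, hc2⟩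
        have hcyc : List.Chain' A ((x :: m) ++ [x]) := by
          rcases List.isChain_append.1 hcfull with ⟨hcm, -, hj⟩
          refine List.isChain_append.2 ⟨hcm, List.isChain_singleton x, ?_⟩
          intro u hu v hv
          have hvx : v = x := by simpa using hv.symm
          rw [hvx]
          exact hj u hu x rfl
        have hnn : 0 ≤ pathWeight w ((x :: m) ++ [x]) := pw_nonneg w hwpos hcyc
        obtain ⟨q, hq, hqw⟩ := ih p' a b hlen' hh' hl' hc'
        exact ⟨q, hq, by linarith⟩

end Aux

/-- In a symmetric directed graph with symmetric positive arc weights,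
a shortest path from `a` to `b` and a shortest path from `b` to `c` share no arc. -/
theorem consecutive_shortest_paths_arc_disjoint
    {V : Type*} (A : V → V → Prop) (w : V → V → ℝ)
    (hsym : ∀ x y, A x y → A y x)
    (hwsym : ∀ x y, A x y → w x y = w y x)
    (hwpos : ∀ x y, A x y → 0 < w x y)
    (a b c : V) (Pab Pbc : List V)
    (hab : IsShortestDiPath A w a b Pab)
    (hbc : IsShortestDiPath A w b c Pbc) :
    ∀ e ∈ pathArcs Pab, e ∉ pathArcs Pbc := by
  rintro ⟨x, y⟩ h1 h2
  obtain ⟨⟨hha, hla, hca, hnda⟩, hmina⟩ := hab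
  obtain ⟨⟨hhb, hlb, hcb, hndb⟩, hminb⟩ := hbc
  have hA : A x y := arc_of_mem_pathArcs hca h1
  obtain ⟨s1, t1, hPab⟩ := mem_pathArcs_split h1
  obtain ⟨s2, t2, hPbc⟩ := mem_pathArcs_split h2
  simp only at hPab hPbc
  subst hPab hPbc
  -- chain facts for Pab
  have hca' : List.Chain' A ((s1 ++ [x]) ++ (y :: t1)) := by simpa using hca
  rcases List.isChain_append.1 hca' with ⟨hcs1x, hcyt1, hj1⟩
  have hcs1 : List.Chain' A s1 := (List.isChain_append.1 hcs1x).1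
  have hjs1 : ∀ u ∈ s1.getLast?, A u x := by
    intro u hu
    exact (List.isChain_append.1 hcs1x).2.2 u hu x rfl
  have hct1 : List.Chain' A t1 := (List.isChain_cons.1 hcyt1).2
  have hjyt1 : ∀ v ∈ t1.head?, A y v := (List.isChain_cons.1 hcyt1).1
  -- chain facts for Pbc
  have hcb' : List.Chain' A ((s2 ++ [x]) ++ (y :: t2)) := by simpa using hcb
  rcases List.isChain_append.1 hcb' with ⟨hcs2x, hcyt2, hj2⟩
  -- shared arc weight
  have hjxy1 : A x y := hA
  -- walk Q1 : from a to b,  s1 ++ [x] then back along s2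
  have hcrev2 : List.Chain' A (s2 ++ [x]).reverse :=
    List.isChain_reverse.2 ((hcs2x).imp fun u v h => hsym u v h)
  have hQ1chain : List.Chain' A (s1 ++ (s2 ++ [x]).reverse) := by
    refine List.isChain_append.2 ⟨hcs1, hcrev2, ?_⟩
    intro u hu v hv
    rw [List.head?_reverse, List.getLast?_concat] at hv
    have : v = x := by simpa using hv.symm
    rw [this]; exact hjs1 u hu
  have hQ1head : (s1 ++ (s2 ++ [x]).reverse).head? = some a := by
    rw [← hha]
    rw [List.head?_append, List.head?_append]
    rw [show (s2 ++ [x]).reverse = x :: s2.reverse by simp]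
    simp
  have hQ1last : (s1 ++ (s2 ++ [x]).reverse).getLast? = some b := by
    rw [List.getLast?_append_of_ne_nil s1 (by simp), List.getLast?_reverse]
    rw [← hhb, List.head?_append, List.head?_append]
    simp
  have hQ1w : pathWeight w (s1 ++ (s2 ++ [x]).reverse)
      = pathWeight w (s1 ++ [x]) + pathWeight w (s2 ++ [x]) := by
    rw [show (s2 ++ [x]).reverse = x :: s2.reverse by simp, pw_split]
    rw [show x :: s2.reverse = (s2 ++ [x]).reverse by simp,
      pw_reverse w hwsym hcs2x]
  -- walk Q2 : from b to c, back along t1 then y :: t2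
  have hcrevt1 : List.Chain' A t1.reverse :=
    List.isChain_reverse.2 (hct1.imp fun u v h => hsym u v h)
  have hQ2chain : List.Chain' A (t1.reverse ++ (y :: t2)) := by
    refine List.isChain_append.2 ⟨hcrevt1, hcyt2, ?_⟩
    intro u hu v hv
    rw [List.getLast?_reverse] at hu
    have : v = y := by simpa using hv.symm
    rw [this]; exact hsym y u (hjyt1 u hu)
  have hQ2head : (t1.reverse ++ (y :: t2)).head? = some b := by
    rw [← hla, List.getLast?_append_of_ne_nil s1 (by simp),
      List.getLast?_cons_cons, List.head?_append, List.head?_reverse,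
      List.getLast?_cons]
    cases t1 <;> simp [List.getLast?_cons]
  have hQ2last : (t1.reverse ++ (y :: t2)).getLast? = some c := by
    rw [← hlb, List.getLast?_append_of_ne_nil s2 (by simp),
      List.getLast?_cons_cons, List.getLast?_append_of_ne_nil t1.reverse (by simp)]
  have hQ2w : pathWeight w (t1.reverse ++ (y :: t2))
      = pathWeight w (y :: t1) + pathWeight w (y :: t2) := by
    rw [pw_split]
    rw [show t1.reverse ++ [y] = (y :: t1).reverse by simp,
      pw_reverse w hwsym hcyt1]
  -- original weights
  have hWab : pathWeight w (s1 ++ x :: y :: t1)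
      = pathWeight w (s1 ++ [x]) + (w x y + pathWeight w (y :: t1)) := by
    rw [pw_split, pw_cons]; simp
  have hWbc : pathWeight w (s2 ++ x :: y :: t2)
      = pathWeight w (s2 ++ [x]) + (w x y + pathWeight w (y :: t2)) := by
    rw [pw_split, pw_cons]; simp
  -- shorten walks to simple paths and use minimality
  obtain ⟨q1, hq1, hq1w⟩ := walk_to_path hwpos _ (s1 ++ (s2 ++ [x]).reverse) a b
    le_rfl hQ1head hQ1last hQ1chain
  obtain ⟨q2, hq2, hq2w⟩ := walk_to_path hwpos _ (t1.reverse ++ (y :: t2)) b c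
    le_rfl hQ2head hQ2last hQ2chain
  have i1 := hmina q1 hq1
  have i2 := hminb q2 hq2
  rw [hWab] at i1
  rw [hWbc] at i2
  rw [hQ1w] at hq1w
  rw [hQ2w] at hq2w
  have hpos := hwpos x y hA
  linarith
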